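/- Let P(t) = At + B be a nonconstant real affine function and let a < b. Denote ‖P‖ = max_{x ∈ [a,b]} |P(x)|. Then for any ε > 0, the Lebesgue measure of the set {t ∈ [a,b] : |P(t)| < ε‖P‖} is at most 2ε(b-a). -/

import Mathlib

open MeasureTheory

lemma aux0 (A B a b ε N : ℝ) (hA : 0 < A) (hab : a < b) (hε : 0 < ε) (hε1 : ε < 1)
    (hN : IsGreatest ((fun t => |A * t + B|) '' Set.Icc a b) N) :
    volume {t ∈ Set.Icc a b | |A * t + B| < ε * N} ≤ ENNReal.ofReal (2 * ε * (b - a)) := by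
  have ha' : |A * a + B| ≤ N := hN.2 ⟨a, Set.left_mem_Icc.2 hab.le, rfl⟩
  have hb' : |A * b + B| ≤ N := hN.2 ⟨b, Set.right_mem_Icc.2 hab.le, rfl⟩
  have hN0 : 0 ≤ N := le_trans (abs_nonneg _) ha'
  have hmax : N ≤ max |A * a + B| |A * b + B| := by
    obtain ⟨t, ht, rfl⟩ := hN.1
    exact abs_le_max_abs_abs (by nlinarith [ht.1]) (by nlinarith [ht.2])
  rcases le_or_gt N (A * (b - a)) with h | h
  · have hsub : {t ∈ Set.Icc a b | |A * t + B| < ε * N} ⊆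
        Set.Ioo ((-(ε * N) - B) / A) ((ε * N - B) / A) := by
      rintro t ⟨ht, habs⟩
      rw [abs_lt] at habs
      constructor
      · rw [div_lt_iff₀ hA]; nlinarith [habs.1]
      · rw [lt_div_iff₀ hA]; nlinarith [habs.2]
    calc volume {t ∈ Set.Icc a b | |A * t + B| < ε * N}
        ≤ volume (Set.Ioo ((-(ε * N) - B) / A) ((ε * N - B) / A)) := measure_mono hsub
      _ = ENNReal.ofReal ((ε * N - B) / A - (-(ε * N) - B) / A) := Real.volume_Ioo
      _ ≤ ENNReal.ofReal (2 * ε * (b - a)) := by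
          apply ENNReal.ofReal_le_ofReal
          rw [div_sub_div_same, div_le_iff₀ hA]
          nlinarith
  · rcases le_max_iff.1 hmax with hca | hcb
    · have heq : |A * a + B| = N := le_antisymm ha' hca
      rcases (abs_eq hN0).1 heq with h1 | h1
      · exfalso; nlinarith [le_abs_self (A * b + B)]
      · have hsub : {t ∈ Set.Icc a b | |A * t + B| < ε * N} ⊆
            Set.Ioc ((-(ε * N) - B) / A) b := by
          rintro t ⟨ht, habs⟩
          rw [abs_lt] at habs
          exact ⟨by rw [div_lt_iff₀ hA]; nlinarith [habs.1], ht.2⟩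
        calc volume {t ∈ Set.Icc a b | |A * t + B| < ε * N}
            ≤ volume (Set.Ioc ((-(ε * N) - B) / A) b) := measure_mono hsub
          _ = ENNReal.ofReal (b - (-(ε * N) - B) / A) := Real.volume_Ioc
          _ ≤ ENNReal.ofReal (2 * ε * (b - a)) := by
              apply ENNReal.ofReal_le_ofReal
              have h2 : b - 2 * ε * (b - a) ≤ (-(ε * N) - B) / A := by
                rw [le_div_iff₀ hA]
                nlinarith [mul_nonneg (sub_nonneg.2 hε1.le) (sub_nonneg.2 h.le),
                  mul_pos hε (mul_pos hA (sub_pos.2 hab))]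
              linarith
    · have heq : |A * b + B| = N := le_antisymm hb' hcb
      rcases (abs_eq hN0).1 heq with h1 | h1
      · have hsub : {t ∈ Set.Icc a b | |A * t + B| < ε * N} ⊆
            Set.Ico a ((ε * N - B) / A) := by
          rintro t ⟨ht, habs⟩
          rw [abs_lt] at habs
          exact ⟨ht.1, by rw [lt_div_iff₀ hA]; nlinarith [habs.2]⟩
        calc volume {t ∈ Set.Icc a b | |A * t + B| < ε * N}
            ≤ volume (Set.Ico a ((ε * N - B) / A)) := measure_mono hsub
          _ = ENNReal.ofReal ((ε * N - B) / A - a) := Real.volume_Ico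
          _ ≤ ENNReal.ofReal (2 * ε * (b - a)) := by
              apply ENNReal.ofReal_le_ofReal
              have h2 : (ε * N - B) / A ≤ a + 2 * ε * (b - a) := by
                rw [div_le_iff₀ hA]
                nlinarith [mul_nonneg (sub_nonneg.2 hε1.le) (sub_nonneg.2 h.le),
                  mul_pos hε (mul_pos hA (sub_pos.2 hab))]
              linarith
      · exfalso; nlinarith [neg_abs_le (A * a + B)]

/-- If `P(t) = A·t + B` is a nonconstant affine function, `a < b`, and `N` is the maximum
of `|P|` over `[a,b]`, then for any `ε > 0` the Lebesgue measure of
`{t ∈ [a,b] : |P(t)| < ε·N}` is at most `2ε(b-a)`. -/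
theorem stmt0 (A B a b ε N : ℝ) (hAB : (A, B) ≠ (0, 0)) (hab : a < b) (hε : 0 < ε)
    (hN : IsGreatest ((fun t => |A * t + B|) '' Set.Icc a b) N) :
    volume {t ∈ Set.Icc a b | |A * t + B| < ε * N} ≤ ENNReal.ofReal (2 * ε * (b - a)) := by
  rcases le_or_gt 1 ε with hε1 | hε1
  · calc volume {t ∈ Set.Icc a b | |A * t + B| < ε * N}
        ≤ volume (Set.Icc a b) := measure_mono (Set.sep_subset _ _)
      _ = ENNReal.ofReal (b - a) := Real.volume_Icc
      _ ≤ ENNReal.ofReal (2 * ε * (b - a)) := by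
          apply ENNReal.ofReal_le_ofReal; nlinarith
  · by_cases hA0 : A = 0
    · subst hA0
      have hB : B ≠ 0 := by
        intro hB; exact hAB (by simp [hB])
      obtain ⟨t, ht, hNval⟩ := hN.1
      simp only [zero_mul, zero_add] at hNval
      have hset : {t ∈ Set.Icc a b | |0 * t + B| < ε * N} = ∅ := by
        ext t
        simp only [Set.mem_setOf_eq, Set.mem_empty_iff_false, iff_false, not_and]
        intro _
        rw [zero_mul, zero_add, ← hNval]
        nlinarith [abs_pos.2 hB]
      rw [hset, measure_empty]
      exact zero_le
    · rcases lt_or_gt_of_ne hA0 with hA | hA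
      · have hfun : (fun t => |(-A) * t + (-B)|) = fun t => |A * t + B| := by
          funext t
          rw [show (-A) * t + (-B) = -(A * t + B) by ring, abs_neg]
        have h2 := aux0 (-A) (-B) a b ε N (by linarith) hab hε hε1 (by rwa [hfun])
        have hset : {t ∈ Set.Icc a b | |(-A) * t + (-B)| < ε * N} =
            {t ∈ Set.Icc a b | |A * t + B| < ε * N} := by
          ext t
          rw [Set.mem_setOf_eq, Set.mem_setOf_eq, congrFun hfun t]
        rwa [hset] at h2
      · exact aux0 A B a b ε N hA hab hε hε1 hN
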